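/- For any extension of IL: if Γ ≺_S Δ then Γ ≺_{S ∪ Γ_S^⊡} Δ, where Γ_S^⊡ = { A : for some finite S' ⊆ S, ¬A ▷ ⋁_{S_i∈S'}¬S_i ∈ Γ } ∪ { □A : for some finite S' ⊆ S, ¬A ▷ ⋁_{S_i∈S'}¬S_i ∈ Γ }. -/

import Mathlib

inductive ILForm : Type
  | bot : ILForm
  | var : ℕ → ILForm
  | imp : ILForm → ILForm → ILForm
  | box : ILForm → ILForm
  | rhd : ILForm → ILForm → ILForm
  deriving DecidableEq

namespace ILForm

def neg (A : ILForm) : ILForm := A.imp ILForm.bot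
def or (A B : ILForm) : ILForm := A.neg.imp B
def and (A B : ILForm) : ILForm := (A.imp B.neg).neg
def dia (A : ILForm) : ILForm := A.neg.box.neg

end ILForm

/-- A Boolean valuation: respects `⊥` and `→`, arbitrary on variables, boxes and `▷`. -/
def IsBoolVal (v : ILForm → Bool) : Prop :=
  v ILForm.bot = false ∧ ∀ A B : ILForm, v (A.imp B) = (!(v A) || v B)

/-- Classical tautologies in the modal language. -/
def ILTaut (A : ILForm) : Prop := ∀ v, IsBoolVal v → v A = true

/-- Provability in the interpretability logic IL. -/
inductive ILProv : ILForm → Prop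
  | taut {A : ILForm} : ILTaut A → ILProv A
  | K {A B : ILForm} : ILProv (((A.imp B).box).imp ((A.box).imp (B.box)))
  | L {A : ILForm} : ILProv ((((A.box).imp A).box).imp (A.box))
  | J1 {A B : ILForm} : ILProv (((A.imp B).box).imp (A.rhd B))
  | J2 {A B C : ILForm} : ILProv (((A.rhd B).and (B.rhd C)).imp (A.rhd C))
  | J3 {A B C : ILForm} : ILProv (((A.rhd C).and (B.rhd C)).imp ((A.or B).rhd C))
  | J4 {A B : ILForm} : ILProv ((A.rhd B).imp ((A.dia).imp (B.dia)))
  | J5 {A : ILForm} : ILProv ((A.dia).rhd A)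
  | mp {A B : ILForm} : ILProv (A.imp B) → ILProv A → ILProv B
  | nec {A : ILForm} : ILProv A → ILProv (A.box)

/-- An extension of IL: contains all IL theorems, closed under modus ponens and necessitation. -/
structure ILExtension (P : ILForm → Prop) : Prop where
  il : ∀ {A}, ILProv A → P A
  mp : ∀ {A B}, P (A.imp B) → P A → P B
  nec : ∀ {A}, P A → P (A.box)

/-- Derivability from a set of assumptions in the logic `P`. -/
inductive Deriv (P : ILForm → Prop) (S : Set ILForm) : ILForm → Prop
  | thm {A : ILForm} : P A → Deriv P S A
  | mem {A : ILForm} : A ∈ S → Deriv P S A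
  | mp {A B : ILForm} : Deriv P S (A.imp B) → Deriv P S A → Deriv P S B

def ILConsistent (P : ILForm → Prop) (S : Set ILForm) : Prop := ¬ Deriv P S ILForm.bot

/-- Maximal consistent set w.r.t. the logic `P`. -/
def ILMCS (P : ILForm → Prop) (S : Set ILForm) : Prop :=
  ILConsistent P S ∧ ∀ T : Set ILForm, S ⊂ T → ¬ ILConsistent P T

/-- Finite disjunction; the empty disjunction is `⊥`. -/
def bigOr : List ILForm → ILForm
  | [] => ILForm.bot
  | A :: l => A.or (bigOr l)

/-- `Assuring Γ Δ S` ("Γ ≺_S Δ"): Δ is an S-assuring successor of Γ. -/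
def Assuring (Γ Δ : Set ILForm) (S : Set ILForm) : Prop :=
  ∀ (A : ILForm) (L : List ILForm), (∀ B ∈ L, B ∈ S) →
    (A.neg.rhd (bigOr (L.map ILForm.neg))) ∈ Γ → A ∈ Δ ∧ A.box ∈ Δ

/-- `Succ Γ Δ` ("Γ ≺ Δ"): whenever □A ∈ Γ, both A and □A are in Δ. -/
def Succ (Γ Δ : Set ILForm) : Prop :=
  ∀ A : ILForm, A.box ∈ Γ → A ∈ Δ ∧ A.box ∈ Δ

/-- The set Γ_S^⊡ of formulas (and their boxes) promised by Γ relative to the label S. -/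
def boxdotSet (Γ S : Set ILForm) : Set ILForm :=
  {X | ∃ (A : ILForm) (L : List ILForm), (∀ B ∈ L, B ∈ S) ∧
      (A.neg.rhd (bigOr (L.map ILForm.neg))) ∈ Γ ∧ (X = A ∨ X = A.box)}

section Aux

variable {P : ILForm → Prop} {Γ : Set ILForm}

lemma val_neg {v : ILForm → Bool} (hv : IsBoolVal v) (A : ILForm) :
    v A.neg = !v A := by simp [ILForm.neg, hv.2, hv.1]

lemma val_or {v : ILForm → Bool} (hv : IsBoolVal v) (A B : ILForm) :
    v (A.or B) = (v A || v B) := by simp [ILForm.or, hv.2, val_neg hv]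

lemma val_and {v : ILForm → Bool} (hv : IsBoolVal v) (A B : ILForm) :
    v (A.and B) = (v A && v B) := by
  simp only [ILForm.and, val_neg hv, hv.2]; cases v A <;> cases v B <;> simp

lemma val_bigOr {v : ILForm → Bool} (hv : IsBoolVal v) (l : List ILForm) :
    v (bigOr l) = l.any v := by
  induction l with
  | nil => simpa [bigOr] using hv.1
  | cons a l ih => simp [bigOr, val_or hv, ih]

lemma deriv_cut {A B : ILForm} (h : Deriv P (insert A Γ) B) (hA : Deriv P Γ A) :
    Deriv P Γ B := by
  induction h with
  | thm h => exact .thm h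
  | mem h => rcases h with h | h; · exact h ▸ hA
             · exact .mem h
  | mp _ _ ih1 ih2 => exact .mp ih1 ih2

lemma mcs_deriv (hΓ : ILMCS P Γ) {A : ILForm} (h : Deriv P Γ A) : A ∈ Γ := by
  by_contra hA
  exact hΓ.1 (deriv_cut (not_not.1 (hΓ.2 _ (Set.ssubset_insert hA))) h)

lemma mcs_thm (hΓ : ILMCS P Γ) {A : ILForm} (h : P A) : A ∈ Γ :=
  mcs_deriv hΓ (.thm h)

lemma mcs_mp (hΓ : ILMCS P Γ) {A B : ILForm} (h1 : A.imp B ∈ Γ) (h2 : A ∈ Γ) : B ∈ Γ :=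
  mcs_deriv hΓ (.mp (.mem h1) (.mem h2))

variable (hP : ILExtension P)
include hP

lemma P_taut {A : ILForm} (h : ILTaut A) : P A := hP.il (.taut h)

lemma P_rhd_of_imp {A B : ILForm} (h : P (A.imp B)) : P (A.rhd B) :=
  hP.mp (hP.il .J1) (hP.nec h)

lemma mcs_rhd_trans (hΓ : ILMCS P Γ) {A B C : ILForm}
    (h1 : A.rhd B ∈ Γ) (h2 : B.rhd C ∈ Γ) : A.rhd C ∈ Γ := by
  have hand : (A.rhd B).and (B.rhd C) ∈ Γ := by
    refine mcs_mp hΓ (mcs_mp hΓ (mcs_thm hΓ (P_taut hP ?_)) h1) h2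
    intro v hv
    simp [hv.2, val_and hv]
    cases v (A.rhd B) <;> cases v (B.rhd C) <;> simp
  exact mcs_mp hΓ (mcs_thm hΓ (hP.il .J2)) hand

lemma mcs_or_rhd (hΓ : ILMCS P Γ) {A B C : ILForm}
    (h1 : A.rhd C ∈ Γ) (h2 : B.rhd C ∈ Γ) : (A.or B).rhd C ∈ Γ := by
  have hand : (A.rhd C).and (B.rhd C) ∈ Γ := by
    refine mcs_mp hΓ (mcs_mp hΓ (mcs_thm hΓ (P_taut hP ?_)) h1) h2
    intro v hv
    simp [hv.2, val_and hv]
    cases v (A.rhd C) <;> cases v (B.rhd C) <;> simp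
  exact mcs_mp hΓ (mcs_thm hΓ (hP.il .J3)) hand

lemma P_bigOr_mono {l l' : List ILForm} (h : ∀ B ∈ l, B ∈ l') :
    P ((bigOr l).imp (bigOr l')) := by
  refine P_taut hP (fun v hv => ?_)
  simp only [hv.2, val_bigOr hv]
  cases hl : l.any v with
  | false => simp
  | true =>
    simp only [Bool.not_true, Bool.false_or]
    obtain ⟨B, hB, hvB⟩ := List.any_eq_true.1 hl
    exact List.any_eq_true.2 ⟨B, h B hB, hvB⟩

/-- key step for a single promised formula: `¬□C ▷ E ∈ Γ` from `¬C ▷ E ∈ Γ`. -/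
lemma mcs_negbox_rhd (hΓ : ILMCS P Γ) {C E : ILForm}
    (hC : C.neg.rhd E ∈ Γ) : (C.box).neg.rhd E ∈ Γ := by
  -- P (□¬¬C → □C)
  have h1 : P ((C.neg.neg.imp C).box.imp ((C.neg.neg).box.imp C.box)) := hP.il .K
  have h2 : P (C.neg.neg.imp C) := by
    refine P_taut hP (fun v hv => ?_)
    simp only [hv.2, val_neg hv, hv.1]; cases v C <;> simp
  have h3 : P ((C.neg.neg).box.imp C.box) := hP.mp h1 (hP.nec h2)
  -- contraposition: P (¬□C → ¬□¬¬C), and ¬□¬¬C = (C.neg).dia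
  have h4 : P ((C.box).neg.imp ((C.neg).dia)) := by
    refine hP.mp (P_taut hP (fun v hv => ?_)) h3
    simp [hv.2, val_neg hv, ILForm.dia]
    cases v ((C.neg.neg).box) <;> cases v (C.box) <;> simp
  have h5 : (C.box).neg.rhd ((C.neg).dia) ∈ Γ := mcs_thm hΓ (P_rhd_of_imp hP h4)
  have h6 : ((C.neg).dia).rhd C.neg ∈ Γ := mcs_thm hΓ (hP.il .J5)
  exact mcs_rhd_trans hP hΓ (mcs_rhd_trans hP hΓ h5 h6) hC

lemma key (hΓ : ILMCS P Γ) (S : Set ILForm) (L : List ILForm)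
    (hL : ∀ B ∈ L, B ∈ S ∪ boxdotSet Γ S) :
    ∃ M : List ILForm, (∀ B ∈ M, B ∈ S) ∧
      ((bigOr (L.map ILForm.neg)).rhd (bigOr (M.map ILForm.neg))) ∈ Γ := by
  induction L with
  | nil =>
    exact ⟨[], by simp, mcs_thm hΓ (P_rhd_of_imp hP (P_taut hP (fun v hv => by
      simp [hv.2, bigOr, hv.1])))⟩
  | cons B L ih =>
    obtain ⟨M', hM'S, hM'⟩ := ih (fun C hC => hL C (List.mem_cons_of_mem _ hC))
    -- find M_B ⊆ S with B.neg ▷ bigOr (M_B.map neg) ∈ Γ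
    have hB : ∃ N : List ILForm, (∀ C ∈ N, C ∈ S) ∧
        (B.neg.rhd (bigOr (N.map ILForm.neg))) ∈ Γ := by
      rcases hL B List.mem_cons_self with hBS | ⟨C, N, hNS, hCN, hBC⟩
      · refine ⟨[B], by simpa using hBS, mcs_thm hΓ (P_rhd_of_imp hP (P_taut hP
          (fun v hv => ?_)))⟩
        simp only [hv.2, List.map_cons, List.map_nil, bigOr, val_or hv, val_neg hv, hv.1]; cases v B <;> simp
      · rcases hBC with rfl | rfl
        · exact ⟨N, hNS, hCN⟩
        · exact ⟨N, hNS, mcs_negbox_rhd hP hΓ hCN⟩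
    obtain ⟨N, hNS, hN⟩ := hB
    refine ⟨N ++ M', fun C hC => by
      rcases List.mem_append.1 hC with h | h
      · exact hNS C h
      · exact hM'S C h, ?_⟩
    have hmono1 : ((bigOr (N.map ILForm.neg)).rhd
        (bigOr ((N ++ M').map ILForm.neg))) ∈ Γ :=
      mcs_thm hΓ (P_rhd_of_imp hP (P_bigOr_mono hP (fun C hC => by
        simp only [List.map_append, List.mem_append]; exact Or.inl hC)))
    have hmono2 : ((bigOr (M'.map ILForm.neg)).rhd
        (bigOr ((N ++ M').map ILForm.neg))) ∈ Γ :=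
      mcs_thm hΓ (P_rhd_of_imp hP (P_bigOr_mono hP (fun C hC => by
        simp only [List.map_append, List.mem_append]; exact Or.inr hC)))
    have hhead := mcs_rhd_trans hP hΓ hN hmono1
    have htail := mcs_rhd_trans hP hΓ hM' hmono2
    simpa [bigOr] using mcs_or_rhd hP hΓ hhead htail

end Aux

/-- If Γ ≺_S Δ then Γ ≺_{S ∪ Γ_S^⊡} Δ. -/
theorem assuring_extend_boxdot (P : ILForm → Prop) (hP : ILExtension P)
    (Γ Δ : Set ILForm) (hΓ : ILMCS P Γ) (hΔ : ILMCS P Δ)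
    (S : Set ILForm) (h : Assuring Γ Δ S) :
    Assuring Γ Δ (S ∪ boxdotSet Γ S) := by
  intro A L hL hmem
  obtain ⟨M, hMS, hM⟩ := key hP hΓ S L hL
  exact h A M hMS (mcs_rhd_trans hP hΓ hmem hM)
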